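/- arXiv:2410.15870 — 2 statements merged into one kernel-verified Lean document; each statement's English description precedes it below -/
import Mathlib

section
/- Let Ω be a d×d Hermitian complex matrix with 0 ≤ Ω ≤ I (i.e. both Ω and I − Ω are positive semidefinite), and let ψ ∈ ℂ^d be a unit vector with Ωψ = ψ. Then for every density matrix ρ on ℂ^d satisfying ⟨ψ, ρψ⟩ ≤ 1 − ε, where 0 ≤ ε ≤ 1, one has Tr(Ωρ) ≤ 1 − ν(Ω)·ε. -/
open Matrix
open scoped ComplexOrder

/-- The second eigenvalue `λ₂(Ω)` of a strategy operator `Ω` relative to the target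
state `ψ`: the supremum of `⟨φ, Ω φ⟩` over unit vectors `φ` orthogonal to `ψ`. -/
noncomputable def secondEigenvalue (d : ℕ) (Ω : Matrix (Fin d) (Fin d) ℂ)
    (ψ : Fin d → ℂ) : ℝ :=
  sSup {x : ℝ | ∃ φ : Fin d → ℂ,
    star φ ⬝ᵥ φ = 1 ∧ star φ ⬝ᵥ ψ = 0 ∧ (star φ ⬝ᵥ (Ω *ᵥ φ)).re = x}

/-- The spectral gap `ν(Ω) = 1 - λ₂(Ω)`. -/
noncomputable def spectralGap (d : ℕ) (Ω : Matrix (Fin d) (Fin d) ℂ)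
    (ψ : Fin d → ℂ) : ℝ :=
  1 - secondEigenvalue d Ω ψ

section Aux

variable (d : ℕ) (Ω : Matrix (Fin d) (Fin d) ℂ) (ψ : Fin d → ℂ)

/-- Every element of the defining set of `secondEigenvalue` is at most 1. -/
lemma aux_mem_le_one (hΩle : ((1 : Matrix (Fin d) (Fin d) ℂ) - Ω).PosSemidef)
    {x : ℝ} (hx : x ∈ {x : ℝ | ∃ φ : Fin d → ℂ,
      star φ ⬝ᵥ φ = 1 ∧ star φ ⬝ᵥ ψ = 0 ∧ (star φ ⬝ᵥ (Ω *ᵥ φ)).re = x}) : x ≤ 1 := by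
  obtain ⟨φ, hφ1, hφ2, hφ3⟩ := hx
  have h := hΩle.dotProduct_mulVec_nonneg φ
  rw [Matrix.sub_mulVec, Matrix.one_mulVec, dotProduct_sub, hφ1] at h
  rw [Complex.le_def] at h
  have := h.1
  simp only [Complex.zero_re, Complex.sub_re, Complex.one_re] at this
  linarith [hφ3 ▸ this]

lemma aux_bddAbove (hΩle : ((1 : Matrix (Fin d) (Fin d) ℂ) - Ω).PosSemidef) :
    BddAbove {x : ℝ | ∃ φ : Fin d → ℂ,
      star φ ⬝ᵥ φ = 1 ∧ star φ ⬝ᵥ ψ = 0 ∧ (star φ ⬝ᵥ (Ω *ᵥ φ)).re = x} :=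
  ⟨1, fun _ hx => aux_mem_le_one d Ω ψ hΩle hx⟩

lemma aux_lambda2_le_one (hΩle : ((1 : Matrix (Fin d) (Fin d) ℂ) - Ω).PosSemidef) :
    secondEigenvalue d Ω ψ ≤ 1 :=
  Real.sSup_le (fun _ hx => aux_mem_le_one d Ω ψ hΩle hx) zero_le_one

/-- For `w ⊥ ψ`, `⟨w, Ω w⟩.re ≤ λ₂ ⟨w, w⟩.re`. -/
lemma aux_orth_bound (hΩpos : Ω.PosSemidef)
    (hΩle : ((1 : Matrix (Fin d) (Fin d) ℂ) - Ω).PosSemidef)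
    (w : Fin d → ℂ) (hw : star ψ ⬝ᵥ w = 0) :
    (star w ⬝ᵥ (Ω *ᵥ w)).re ≤ secondEigenvalue d Ω ψ * (star w ⬝ᵥ w).re := by
  by_cases hw0 : w = 0
  · simp [hw0]
  · set t : ℝ := (star w ⬝ᵥ w).re with ht
    have htpos : 0 < t := by
      have h1 : 0 ≤ star w ⬝ᵥ w := dotProduct_star_self_nonneg w
      have h2 : star w ⬝ᵥ w ≠ 0 := fun h => hw0 (dotProduct_star_self_eq_zero.mp h)
      rw [Complex.le_def] at h1
      rcases lt_or_eq_of_le h1.1 with h | h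
      · simpa using h
      · exfalso; apply h2
        apply Complex.ext
        · simpa using h.symm
        · simpa using h1.2.symm
    have hwre : star w ⬝ᵥ w = (t : ℂ) := by
      have h1 : 0 ≤ star w ⬝ᵥ w := dotProduct_star_self_nonneg w
      rw [Complex.le_def] at h1
      apply Complex.ext
      · simp [ht]
      · simpa using h1.2.symm
    set s : ℝ := Real.sqrt t with hs
    have hspos : 0 < s := Real.sqrt_pos.mpr htpos
    have hs2 : s * s = t := Real.mul_self_sqrt htpos.le
    set φ : Fin d → ℂ := ((s : ℂ))⁻¹ • w with hφ
    have hstar : star φ = ((s : ℂ))⁻¹ • star w := by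
      simp [hφ, star_smul, Complex.star_def, Complex.conj_ofReal]
    have hsne : (s : ℂ) ≠ 0 := by exact_mod_cast hspos.ne'
    have hunit : star φ ⬝ᵥ φ = 1 := by
      rw [hφ, hstar, smul_dotProduct, dotProduct_smul, hwre, smul_eq_mul, smul_eq_mul]
      field_simp
      rw [← hs2]; push_cast; ring
    have horth : star φ ⬝ᵥ ψ = 0 := by
      have : star w ⬝ᵥ ψ = 0 := by
        rw [star_dotProduct, hw, star_zero]
      rw [hstar, smul_dotProduct, this, smul_zero]
    have hval : (star φ ⬝ᵥ (Ω *ᵥ φ)).re = t⁻¹ * (star w ⬝ᵥ (Ω *ᵥ w)).re := by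
      rw [hφ, hstar, Matrix.mulVec_smul, smul_dotProduct, dotProduct_smul,
        smul_eq_mul, smul_eq_mul, ← mul_assoc]
      have h5 : ((s : ℂ))⁻¹ * ((s : ℂ))⁻¹ = ((t⁻¹ : ℝ) : ℂ) := by
        rw [← mul_inv]
        norm_cast
        rw [hs2]
      rw [h5, Complex.re_ofReal_mul]
    have hmem : t⁻¹ * (star w ⬝ᵥ (Ω *ᵥ w)).re ∈ {x : ℝ | ∃ φ : Fin d → ℂ,
        star φ ⬝ᵥ φ = 1 ∧ star φ ⬝ᵥ ψ = 0 ∧ (star φ ⬝ᵥ (Ω *ᵥ φ)).re = x} :=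
      ⟨φ, hunit, horth, hval⟩
    have hle : t⁻¹ * (star w ⬝ᵥ (Ω *ᵥ w)).re ≤ secondEigenvalue d Ω ψ :=
      le_csSup (aux_bddAbove d Ω ψ hΩle) hmem
    calc (star w ⬝ᵥ (Ω *ᵥ w)).re = t * (t⁻¹ * (star w ⬝ᵥ (Ω *ᵥ w)).re) := by
          field_simp
      _ ≤ t * secondEigenvalue d Ω ψ := by
          exact mul_le_mul_of_nonneg_left hle htpos.le
      _ = secondEigenvalue d Ω ψ * t := mul_comm _ _

/-- Key pointwise inequality. -/
lemma aux_pointwise (hΩherm : Ω.IsHermitian) (hΩpos : Ω.PosSemidef)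
    (hΩle : ((1 : Matrix (Fin d) (Fin d) ℂ) - Ω).PosSemidef)
    (hψ : star ψ ⬝ᵥ ψ = 1) (hΩψ : Ω *ᵥ ψ = ψ) (u : Fin d → ℂ) :
    (star u ⬝ᵥ (Ω *ᵥ u)).re ≤ Complex.normSq (star ψ ⬝ᵥ u)
      + secondEigenvalue d Ω ψ * ((star u ⬝ᵥ u).re - Complex.normSq (star ψ ⬝ᵥ u)) := by
  set c : ℂ := star ψ ⬝ᵥ u with hc
  set w : Fin d → ℂ := u - c • ψ with hwdef
  have hu : u = w + c • ψ := by rw [hwdef]; ring_nf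
  have hworth : star ψ ⬝ᵥ w = 0 := by
    rw [hwdef, dotProduct_sub, dotProduct_smul, hψ, smul_eq_mul, mul_one, hc, sub_self]
  have hworth' : star w ⬝ᵥ ψ = 0 := by
    rw [star_dotProduct, hworth, star_zero]
  have hψΩw : star ψ ⬝ᵥ (Ω *ᵥ w) = 0 := by
    have h1 : star ψ ᵥ* Ω = star ψ := by
      have := Matrix.star_mulVec (M := Ω) (v := ψ)
      rw [hΩψ, hΩherm.eq] at this
      exact this.symm
    rw [Matrix.dotProduct_mulVec, h1, hworth]
  have hstarc : star (c • ψ) = star c • star ψ := by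
    simp [star_smul]
  have hΩcψ : Ω *ᵥ (c • ψ) = c • ψ := by
    rw [Matrix.mulVec_smul, hΩψ]
  -- expand ⟨u, Ω u⟩
  have hexpand : star u ⬝ᵥ (Ω *ᵥ u) = star w ⬝ᵥ (Ω *ᵥ w) + (Complex.normSq c : ℂ) := by
    rw [hu, star_add, Matrix.mulVec_add, hstarc, hΩcψ]
    rw [add_dotProduct, dotProduct_add, dotProduct_add]
    rw [dotProduct_smul, smul_dotProduct, smul_dotProduct, dotProduct_smul]
    rw [hworth', hψΩw, hψ]
    simp [Complex.normSq_eq_conj_mul_self, Complex.star_def, mul_comm]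
  have hexpand2 : star u ⬝ᵥ u = star w ⬝ᵥ w + (Complex.normSq c : ℂ) := by
    rw [hu, star_add, hstarc]
    rw [add_dotProduct, dotProduct_add, dotProduct_add]
    rw [dotProduct_smul, smul_dotProduct, smul_dotProduct, dotProduct_smul]
    rw [hworth', hworth, hψ]
    simp [Complex.normSq_eq_conj_mul_self, Complex.star_def, mul_comm]
  have hkey := aux_orth_bound d Ω ψ hΩpos hΩle w hworth
  have h1 : (star u ⬝ᵥ (Ω *ᵥ u)).re = (star w ⬝ᵥ (Ω *ᵥ w)).re + Complex.normSq c := by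
    rw [hexpand]; simp
  have h2 : (star w ⬝ᵥ w).re = (star u ⬝ᵥ u).re - Complex.normSq c := by
    rw [hexpand2]; simp
  rw [h1, ← h2]
  linarith

end Aux

/-- If `0 ≤ Ω ≤ I`, `Ω ψ = ψ` for a unit vector `ψ`, and `ρ` is a density matrix with
fidelity `⟨ψ, ρ ψ⟩ ≤ 1 - ε`, then `Tr(Ω ρ) ≤ 1 - ν(Ω) ε`. -/
theorem passing_probability_le (d : ℕ) (Ω : Matrix (Fin d) (Fin d) ℂ)
    (hΩherm : Ω.IsHermitian) (hΩpos : Ω.PosSemidef)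
    (hΩle : ((1 : Matrix (Fin d) (Fin d) ℂ) - Ω).PosSemidef)
    (ψ : Fin d → ℂ) (hψ : star ψ ⬝ᵥ ψ = 1) (hΩψ : Ω *ᵥ ψ = ψ)
    (ε : ℝ) (hε0 : 0 ≤ ε) (hε1 : ε ≤ 1)
    (ρ : Matrix (Fin d) (Fin d) ℂ) (hρpos : ρ.PosSemidef) (hρtr : ρ.trace = 1)
    (hfid : (star ψ ⬝ᵥ (ρ *ᵥ ψ)).re ≤ 1 - ε) :
    (Ω * ρ).trace.re ≤ 1 - spectralGap d Ω ψ * ε := by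
  obtain ⟨B, hB⟩ : ∃ B : Matrix (Fin d) (Fin d) ℂ, ρ = star B * B := by
    open scoped MatrixOrder Matrix.Norms.L2Operator in
    exact CStarAlgebra.nonneg_iff_eq_star_mul_self.mp hρpos.nonneg
  rw [star_eq_conjTranspose] at hB; subst hB
  set u : Fin d → Fin d → ℂ := fun i => star (B i) with hu
  -- trace identity
  have htrace : (Ω * (Bᴴ * B)).trace = ∑ i, star (u i) ⬝ᵥ (Ω *ᵥ u i) := by
    rw [← Matrix.mul_assoc, Matrix.trace_mul_cycle]
    rw [Matrix.trace]
    apply Finset.sum_congr rfl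
    intro i _
    simp only [Matrix.diag_apply, Matrix.mul_apply, Matrix.conjTranspose_apply,
      dotProduct, Matrix.mulVec, hu, Pi.star_apply, star_star,
      Finset.sum_mul, Finset.mul_sum]
    rw [Finset.sum_comm]
    apply Finset.sum_congr rfl
    intro j _
    apply Finset.sum_congr rfl
    intro k _
    ring
  -- trace of ρ
  have htrρ : (Bᴴ * B).trace = ∑ i, star (u i) ⬝ᵥ u i := by
    rw [Matrix.trace]
    simp only [Matrix.diag_apply, Matrix.mul_apply, Matrix.conjTranspose_apply,
      dotProduct, hu, Pi.star_apply, star_star]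
    rw [Finset.sum_comm]
    apply Finset.sum_congr rfl
    intro j _
    apply Finset.sum_congr rfl
    intro k _
    ring
  -- fidelity
  have hfid2 : (star ψ ⬝ᵥ ((Bᴴ * B) *ᵥ ψ)).re = ∑ i, Complex.normSq (star ψ ⬝ᵥ u i) := by
    have h1 : star ψ ⬝ᵥ ((Bᴴ * B) *ᵥ ψ) = star (B *ᵥ ψ) ⬝ᵥ (B *ᵥ ψ) := by
      rw [← Matrix.mulVec_mulVec, Matrix.dotProduct_mulVec, Matrix.star_mulVec]
    have h2 : ∀ i, star ψ ⬝ᵥ u i = star ((B *ᵥ ψ) i) := by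
      intro i
      simp only [dotProduct, Matrix.mulVec, hu, Pi.star_apply, star_sum, star_mul']
      apply Finset.sum_congr rfl
      intro j _
      simp [mul_comm]
    rw [h1, dotProduct, Complex.re_sum]
    apply Finset.sum_congr rfl
    intro i _
    rw [h2 i, Pi.star_apply]
    simp [Complex.star_def, Complex.normSq_conj, ← Complex.normSq_eq_conj_mul_self]
  have hkey : ∀ i, (star (u i) ⬝ᵥ (Ω *ᵥ u i)).re ≤ Complex.normSq (star ψ ⬝ᵥ u i)
      + secondEigenvalue d Ω ψ * ((star (u i) ⬝ᵥ u i).re - Complex.normSq (star ψ ⬝ᵥ u i)) :=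
    fun i => aux_pointwise d Ω ψ hΩherm hΩpos hΩle hψ hΩψ (u i)
  set lam := secondEigenvalue d Ω ψ with hlam
  set f : ℝ := ∑ i, Complex.normSq (star ψ ⬝ᵥ u i) with hf
  have hT : ∑ i, (star (u i) ⬝ᵥ u i).re = 1 := by
    have : ((Bᴴ * B).trace).re = 1 := by rw [hρtr]; simp
    rw [htrρ] at this
    rw [← this]
    simp [Complex.re_sum]
  have hmain : (Ω * (Bᴴ * B)).trace.re ≤ f + lam * (1 - f) := by
    rw [htrace]
    rw [Complex.re_sum]
    calc ∑ i, (star (u i) ⬝ᵥ (Ω *ᵥ u i)).re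
        ≤ ∑ i, (Complex.normSq (star ψ ⬝ᵥ u i)
          + lam * ((star (u i) ⬝ᵥ u i).re - Complex.normSq (star ψ ⬝ᵥ u i))) :=
          Finset.sum_le_sum fun i _ => hkey i
      _ = f + lam * (1 - f) := by
          rw [Finset.sum_add_distrib, ← Finset.mul_sum, Finset.sum_sub_distrib, hT, ← hf]
  have hlam1 : lam ≤ 1 := aux_lambda2_le_one d Ω ψ hΩle
  have hfle : f ≤ 1 - ε := by rw [hfid2] at hfid; exact hfid
  rw [spectralGap, ← hlam]
  nlinarith [mul_le_mul_of_nonneg_left hfle (sub_nonneg.mpr hlam1)]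
end

section
/- Let d ≥ 2, let Ω be a d×d Hermitian complex matrix with 0 ≤ Ω ≤ I, and let ψ ∈ ℂ^d be a unit vector with Ωψ = ψ. Then for every ε with 0 ≤ ε ≤ 1 there exists a density matrix ρ on ℂ^d with ⟨ψ, ρψ⟩ = 1 − ε and Tr(Ωρ) = 1 − ν(Ω)·ε; in other words, the worst-case passing probability max{Tr(Ωρ) : ρ density matrix, ⟨ψ, ρψ⟩ ≤ 1 − ε} equals 1 − ν(Ω)·ε. -/
open Matrix
open scoped ComplexOrder

namespace WCPPAux

variable {d : ℕ}

lemma vecMulVec_star_mulVec (x v : Fin d → ℂ) :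
    vecMulVec x (star x) *ᵥ v = (star x ⬝ᵥ v) • x := by
  ext i
  simp only [mulVec, vecMulVec_apply, dotProduct, Pi.smul_apply, smul_eq_mul,
    Finset.sum_mul]
  exact Finset.sum_congr rfl fun j _ => by ring

lemma outer_posSemidef (x : Fin d → ℂ) : (vecMulVec x (star x)).PosSemidef := by
  refine PosSemidef.of_dotProduct_mulVec_nonneg ?_ ?_
  · ext i j
    simp [conjTranspose_apply, vecMulVec_apply, mul_comm]
  · intro v
    rw [vecMulVec_star_mulVec, dotProduct_smul]
    have h : star v ⬝ᵥ x = star (star x ⬝ᵥ v) := by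
      rw [star_dotProduct]
    rw [h, smul_eq_mul]
    exact mul_star_self_nonneg _

lemma trace_outer (x : Fin d → ℂ) : (vecMulVec x (star x)).trace = star x ⬝ᵥ x := by
  simp only [trace, diag, vecMulVec_apply, dotProduct]
  exact Finset.sum_congr rfl fun i _ => mul_comm _ _

lemma trace_mul_outer (A : Matrix (Fin d) (Fin d) ℂ) (x : Fin d → ℂ) :
    (A * vecMulVec x (star x)).trace = star x ⬝ᵥ (A *ᵥ x) := by
  simp only [trace, diag, mul_apply, vecMulVec_apply, dotProduct, mulVec]
  refine Finset.sum_congr rfl fun i _ => ?_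
  rw [Finset.mul_sum]
  exact Finset.sum_congr rfl fun j _ => by ring

lemma trace_psd_nonneg {A : Matrix (Fin d) (Fin d) ℂ} (hA : A.PosSemidef) :
    0 ≤ A.trace := by
  rw [trace]
  refine Finset.sum_nonneg fun i _ => ?_
  have := hA.dotProduct_mulVec_nonneg (Pi.single i 1)
  simpa [dotProduct, mulVec, Pi.single_apply, mul_ite, ite_mul] using this

open scoped MatrixOrder in
lemma trace_mul_psd_nonneg {A B : Matrix (Fin d) (Fin d) ℂ}
    (hA : A.PosSemidef) (hB : B.PosSemidef) : 0 ≤ (A * B).trace := by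
  obtain ⟨C, rfl⟩ := CStarAlgebra.nonneg_iff_eq_star_mul_self.mp hB.nonneg
  rw [← Matrix.mul_assoc, trace_mul_cycle]
  exact trace_psd_nonneg (hA.mul_mul_conjTranspose_same C)

lemma complex_nonneg_eq_re {z : ℂ} (h : 0 ≤ z) : z = (z.re : ℂ) := by
  rw [Complex.le_def] at h
  exact Complex.ext rfl (by simpa using h.2.symm)

lemma dot_self_eq_re (v : Fin d → ℂ) :
    star v ⬝ᵥ v = (((star v ⬝ᵥ v).re : ℝ) : ℂ) :=
  complex_nonneg_eq_re (dotProduct_star_self_nonneg v)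

lemma dot_self_re_nonneg (v : Fin d → ℂ) : 0 ≤ (star v ⬝ᵥ v).re := by
  have h := (Complex.le_def.mp (dotProduct_star_self_nonneg v)).1
  simpa using h

lemma herm_dot_real {A : Matrix (Fin d) (Fin d) ℂ} (hA : A.IsHermitian) (v : Fin d → ℂ) :
    star v ⬝ᵥ (A *ᵥ v) = (((star v ⬝ᵥ (A *ᵥ v)).re : ℝ) : ℂ) := by
  have h : star (star v ⬝ᵥ (A *ᵥ v)) = star v ⬝ᵥ (A *ᵥ v) := by
    rw [← star_dotProduct, star_mulVec, hA.eq, ← dotProduct_mulVec]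
  have him : (star v ⬝ᵥ (A *ᵥ v)).im = 0 := by
    have := congrArg Complex.im h
    simp only [Complex.star_def, Complex.conj_im] at this
    linarith
  exact Complex.ext rfl (by simp [him])

lemma dot_smul_mulVec (A : Matrix (Fin d) (Fin d) ℂ) (c : ℂ) (w : Fin d → ℂ) :
    star (c • w) ⬝ᵥ (A *ᵥ (c • w)) = (star c * c) * (star w ⬝ᵥ (A *ᵥ w)) := by
  rw [star_smul, mulVec_smul, smul_dotProduct, dotProduct_smul, smul_eq_mul, smul_eq_mul]
  ring

lemma dot_smul_smul (c : ℂ) (w v : Fin d → ℂ) :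
    star (c • w) ⬝ᵥ (c • v) = (star c * c) * (star w ⬝ᵥ v) := by
  rw [star_smul, smul_dotProduct, dotProduct_smul, smul_eq_mul, smul_eq_mul]
  ring

lemma exists_unit_scale (w : Fin d → ℂ) (hw : w ≠ 0) :
    ∃ c : ℝ, 0 < c ∧ star ((c:ℂ) • w) ⬝ᵥ ((c:ℂ) • w) = 1 ∧
      ∀ A : Matrix (Fin d) (Fin d) ℂ,
        (star w ⬝ᵥ (A *ᵥ w)).re
          = (star w ⬝ᵥ w).re * (star ((c:ℂ) • w) ⬝ᵥ (A *ᵥ ((c:ℂ) • w))).re := by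
  have hs : 0 < (star w ⬝ᵥ w).re := by
    have h0 : 0 ≤ star w ⬝ᵥ w := dotProduct_star_self_nonneg w
    have hne : star w ⬝ᵥ w ≠ 0 := fun h => hw (dotProduct_star_self_eq_zero.mp h)
    have h1 := (Complex.le_def.mp h0).1
    have h2 := (Complex.le_def.mp h0).2
    simp only [Complex.zero_re, Complex.zero_im] at h1 h2
    rcases h1.lt_or_eq with h | h
    · exact h
    · exact absurd (Complex.ext h.symm h2.symm) hne
  set s : ℝ := (star w ⬝ᵥ w).re with hs_def
  have hw_eq : star w ⬝ᵥ w = (s : ℂ) := dot_self_eq_re w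
  refine ⟨(Real.sqrt s)⁻¹, by positivity, ?_, ?_⟩
  · rw [dot_smul_smul, hw_eq]
    rw [Complex.star_def, Complex.conj_ofReal]
    rw [← Complex.ofReal_mul, ← Complex.ofReal_mul, ← Complex.ofReal_one]
    congr 1
    rw [← mul_inv, Real.mul_self_sqrt hs.le]
    field_simp
  · intro A
    rw [dot_smul_mulVec, Complex.star_def, Complex.conj_ofReal,
      ← Complex.ofReal_mul, Complex.re_ofReal_mul]
    rw [← mul_inv, Real.mul_self_sqrt hs.le]
    field_simp

lemma exists_unit_orth (hd : 2 ≤ d) (ψ : Fin d → ℂ) (hψ : ψ ≠ 0) :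
    ∃ φ : Fin d → ℂ, star φ ⬝ᵥ φ = 1 ∧ star φ ⬝ᵥ ψ = 0 := by
  set ψ' : EuclideanSpace ℂ (Fin d) := (WithLp.equiv 2 _).symm ψ with hψ'
  have hψ'0 : ψ' ≠ 0 := fun h => hψ ((WithLp.toLp_eq_zero 2).mp h)
  have hfin : Module.finrank ℂ (ℂ ∙ ψ')ᗮ = d - 1 := by
    have h1 := Submodule.finrank_add_finrank_orthogonal (K := ℂ ∙ ψ')
    rw [finrank_span_singleton hψ'0] at h1
    have h2 : Module.finrank ℂ (EuclideanSpace ℂ (Fin d)) = d := finrank_euclideanSpace_fin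
    omega
  have hne : (ℂ ∙ ψ')ᗮ ≠ ⊥ := by
    intro h
    rw [h, finrank_bot] at hfin
    omega
  obtain ⟨w, hwK, hw0⟩ := Submodule.ne_bot_iff _ |>.mp hne
  set w' : Fin d → ℂ := WithLp.equiv 2 _ w with hw'
  have hinner : @inner ℂ _ _ ψ' w = 0 :=
    Submodule.mem_orthogonal_singleton_iff_inner_right.mp hwK
  have hdot : star ψ ⬝ᵥ w' = 0 := by rw [dotProduct_comm]; exact hinner
  have hdot2 : star w' ⬝ᵥ ψ = 0 := by
    rw [star_dotProduct, hdot, star_zero]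
  have hw0' : w' ≠ 0 := fun h => hw0 ((WithLp.ofLp_eq_zero 2).mp h)
  obtain ⟨c, hc, hunit, -⟩ := exists_unit_scale w' hw0'
  exact ⟨(c:ℂ) • w', hunit, by rw [star_smul, smul_dotProduct, hdot2, smul_zero]⟩

lemma constraint_compact (ψ : Fin d → ℂ) :
    IsCompact {φ : Fin d → ℂ | star φ ⬝ᵥ φ = 1 ∧ star φ ⬝ᵥ ψ = 0} := by
  apply Metric.isCompact_of_isClosed_isBounded
  · have h1 : Continuous fun φ : Fin d → ℂ => star φ ⬝ᵥ φ :=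
      (continuous_star.dotProduct continuous_id)
    have h2 : Continuous fun φ : Fin d → ℂ => star φ ⬝ᵥ ψ :=
      (continuous_star.dotProduct continuous_const)
    exact (isClosed_eq h1 continuous_const).inter (isClosed_eq h2 continuous_const)
  · rw [Metric.isBounded_iff_subset_closedBall 0]
    refine ⟨1, fun φ hφ => ?_⟩
    rw [Metric.mem_closedBall, dist_zero_right]
    rw [pi_norm_le_iff_of_nonneg zero_le_one]
    intro i
    have hre : (star φ ⬝ᵥ φ).re = ∑ j, Complex.normSq (φ j) := by
      rw [dotProduct, Complex.re_sum]
      exact Finset.sum_congr rfl fun j _ => by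
        simp [Complex.mul_re, Complex.normSq_apply, Pi.star_apply, Complex.star_def]
    have h1 : ∑ j, Complex.normSq (φ j) = 1 := by
      rw [← hre, hφ.1]; simp
    have h2 : Complex.normSq (φ i) ≤ 1 := by
      rw [← h1]
      exact Finset.single_le_sum (fun j _ => Complex.normSq_nonneg _) (Finset.mem_univ i)
    have h3 : ‖φ i‖ ^ 2 = Complex.normSq (φ i) := by
      rw [Complex.sq_norm]
    nlinarith [norm_nonneg (φ i)]

lemma psd_smul {A : Matrix (Fin d) (Fin d) ℂ} (hA : A.PosSemidef) {c : ℝ} (hc : 0 ≤ c) :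
    (((c : ℝ) : ℂ) • A).PosSemidef := by
  refine PosSemidef.of_dotProduct_mulVec_nonneg ?_ ?_
  · have : (((c:ℝ):ℂ) • A)ᴴ = ((c:ℝ):ℂ) • A := by
      rw [conjTranspose_smul, hA.1.eq]
      congr 1
      exact Complex.conj_ofReal c
    exact this
  · intro v
    rw [smul_mulVec, dotProduct_smul, smul_eq_mul]
    exact mul_nonneg (Complex.zero_le_real.mpr hc) (hA.dotProduct_mulVec_nonneg v)

lemma herm_real_smul {A : Matrix (Fin d) (Fin d) ℂ} (hA : A.IsHermitian) (c : ℝ) :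
    (((c : ℝ) : ℂ) • A).IsHermitian := by
  have : (((c:ℝ):ℂ) • A)ᴴ = ((c:ℝ):ℂ) • A := by
    rw [conjTranspose_smul, hA.eq]
    congr 1
    exact Complex.conj_ofReal c
  exact this

lemma vecMul_herm_eigen {Ω : Matrix (Fin d) (Fin d) ℂ} (hΩherm : Ω.IsHermitian)
    {ψ : Fin d → ℂ} (hΩψ : Ω *ᵥ ψ = ψ) : star ψ ᵥ* Ω = star ψ := by
  conv_lhs => rw [← hΩherm.eq]
  rw [← star_mulVec, hΩψ]

lemma dot_decomp (A : Matrix (Fin d) (Fin d) ℂ) (ψ : Fin d → ℂ)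
    (hAψ : A *ᵥ ψ = ψ) (hA' : star ψ ᵥ* A = star ψ) (c : ℂ) (w : Fin d → ℂ)
    (hw1 : star ψ ⬝ᵥ w = 0) (hw2 : star w ⬝ᵥ ψ = 0) :
    star (c • ψ + w) ⬝ᵥ (A *ᵥ (c • ψ + w))
      = (star c * c) * (star ψ ⬝ᵥ ψ) + star w ⬝ᵥ (A *ᵥ w) := by
  have hAw : star ψ ⬝ᵥ (A *ᵥ w) = 0 := by
    rw [dotProduct_mulVec, hA', hw1]
  rw [mulVec_add, mulVec_smul, hAψ, star_add, star_smul, add_dotProduct,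
    smul_dotProduct, dotProduct_add, dotProduct_add, dotProduct_smul,
    dotProduct_smul, hAw, hw2, smul_eq_mul, smul_eq_mul, smul_eq_mul]
  ring

section Sup

variable (Ω : Matrix (Fin d) (Fin d) ℂ) (ψ : Fin d → ℂ)

lemma S_bddAbove (hΩle : ((1 : Matrix (Fin d) (Fin d) ℂ) - Ω).PosSemidef) :
    ∀ x ∈ {x : ℝ | ∃ φ : Fin d → ℂ,
      star φ ⬝ᵥ φ = 1 ∧ star φ ⬝ᵥ ψ = 0 ∧ (star φ ⬝ᵥ (Ω *ᵥ φ)).re = x}, x ≤ 1 := by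
  rintro x ⟨φ, h1, _h2, rfl⟩
  have h := (Complex.le_def.mp (hΩle.dotProduct_mulVec_nonneg φ)).1
  rw [sub_mulVec, one_mulVec, dotProduct_sub, Complex.sub_re, h1] at h
  simp only [Complex.zero_re, Complex.one_re] at h
  linarith

lemma quad_le (hΩle : ((1 : Matrix (Fin d) (Fin d) ℂ) - Ω).PosSemidef)
    (w : Fin d → ℂ) (hw : star w ⬝ᵥ ψ = 0) :
    (star w ⬝ᵥ (Ω *ᵥ w)).re ≤ secondEigenvalue d Ω ψ * (star w ⬝ᵥ w).re := by
  by_cases hw0 : w = 0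
  · subst hw0; simp
  obtain ⟨c, hc, hunit, hrel⟩ := exists_unit_scale w hw0
  have horth : star ((c:ℂ) • w) ⬝ᵥ ψ = 0 := by
    rw [star_smul, smul_dotProduct, hw, smul_zero]
  have hbdd : BddAbove {x : ℝ | ∃ φ : Fin d → ℂ,
      star φ ⬝ᵥ φ = 1 ∧ star φ ⬝ᵥ ψ = 0 ∧ (star φ ⬝ᵥ (Ω *ᵥ φ)).re = x} :=
    ⟨1, fun x hx => S_bddAbove Ω ψ hΩle x hx⟩
  have hmem : (star ((c:ℂ) • w) ⬝ᵥ (Ω *ᵥ ((c:ℂ) • w))).re ∈ {x : ℝ | ∃ φ : Fin d → ℂ,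
      star φ ⬝ᵥ φ = 1 ∧ star φ ⬝ᵥ ψ = 0 ∧ (star φ ⬝ᵥ (Ω *ᵥ φ)).re = x} :=
    ⟨_, hunit, horth, rfl⟩
  have hle : (star ((c:ℂ) • w) ⬝ᵥ (Ω *ᵥ ((c:ℂ) • w))).re ≤ secondEigenvalue d Ω ψ :=
    le_csSup hbdd hmem
  have hs : 0 ≤ (star w ⬝ᵥ w).re := dot_self_re_nonneg w
  rw [hrel Ω]
  nlinarith

lemma sup_achieved (hd : 2 ≤ d) (hψ : star ψ ⬝ᵥ ψ = 1)
    (hΩle : ((1 : Matrix (Fin d) (Fin d) ℂ) - Ω).PosSemidef) :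
    ∃ φ : Fin d → ℂ, star φ ⬝ᵥ φ = 1 ∧ star φ ⬝ᵥ ψ = 0 ∧
      (star φ ⬝ᵥ (Ω *ᵥ φ)).re = secondEigenvalue d Ω ψ := by
  have hψ0 : ψ ≠ 0 := by
    intro h; rw [h] at hψ; simp at hψ
  obtain ⟨φ₀, hφ₀u, hφ₀o⟩ := exists_unit_orth hd ψ hψ0
  have hKc : IsCompact {φ : Fin d → ℂ | star φ ⬝ᵥ φ = 1 ∧ star φ ⬝ᵥ ψ = 0} :=
    constraint_compact ψ
  have hKne : Set.Nonempty {φ : Fin d → ℂ | star φ ⬝ᵥ φ = 1 ∧ star φ ⬝ᵥ ψ = 0} :=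
    ⟨φ₀, hφ₀u, hφ₀o⟩
  have hf : Continuous fun φ : Fin d → ℂ => (star φ ⬝ᵥ (Ω *ᵥ φ)).re :=
    Complex.continuous_re.comp
      (continuous_star.dotProduct (continuous_const.matrix_mulVec continuous_id))
  obtain ⟨φm, hφmK, hφmax⟩ := hKc.exists_isMaxOn hKne hf.continuousOn
  refine ⟨φm, hφmK.1, hφmK.2, ?_⟩
  apply le_antisymm
  · exact le_csSup ⟨1, fun x hx => S_bddAbove Ω ψ hΩle x hx⟩ ⟨φm, hφmK.1, hφmK.2, rfl⟩
  · refine csSup_le ⟨(star φ₀ ⬝ᵥ (Ω *ᵥ φ₀)).re, ⟨φ₀, hφ₀u, hφ₀o, rfl⟩⟩ ?_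
    rintro x ⟨φ, h1, h2, rfl⟩
    exact hφmax (Set.mem_setOf.mpr ⟨h1, h2⟩)

lemma lambda_le_one (hd : 2 ≤ d) (hψ : star ψ ⬝ᵥ ψ = 1)
    (hΩle : ((1 : Matrix (Fin d) (Fin d) ℂ) - Ω).PosSemidef) :
    secondEigenvalue d Ω ψ ≤ 1 := by
  obtain ⟨φ, h1, h2, h3⟩ := sup_achieved Ω ψ hd hψ hΩle
  rw [← h3]
  exact S_bddAbove Ω ψ hΩle _ ⟨φ, h1, h2, rfl⟩

end Sup

end WCPPAux
open WCPPAux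
/-- For `d ≥ 2`, the bound `1 - ν(Ω) ε` on the passing probability is attained: there is
a density matrix `ρ` with `⟨ψ, ρ ψ⟩ = 1 - ε` and `Tr(Ω ρ) = 1 - ν(Ω) ε`, and `1 - ν(Ω) ε`
is the maximum of `Tr(Ω ρ)` over density matrices with `⟨ψ, ρ ψ⟩ ≤ 1 - ε`. -/
theorem worst_case_passing_probability (d : ℕ) (hd : 2 ≤ d)
    (Ω : Matrix (Fin d) (Fin d) ℂ)
    (hΩherm : Ω.IsHermitian) (hΩpos : Ω.PosSemidef)
    (hΩle : ((1 : Matrix (Fin d) (Fin d) ℂ) - Ω).PosSemidef)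
    (ψ : Fin d → ℂ) (hψ : star ψ ⬝ᵥ ψ = 1) (hΩψ : Ω *ᵥ ψ = ψ)
    (ε : ℝ) (hε0 : 0 ≤ ε) (hε1 : ε ≤ 1) :
    (∃ ρ : Matrix (Fin d) (Fin d) ℂ, ρ.PosSemidef ∧ ρ.trace = 1 ∧
        (star ψ ⬝ᵥ (ρ *ᵥ ψ)).re = 1 - ε ∧
        (Ω * ρ).trace.re = 1 - spectralGap d Ω ψ * ε) ∧
      IsGreatest {x : ℝ | ∃ ρ : Matrix (Fin d) (Fin d) ℂ, ρ.PosSemidef ∧ ρ.trace = 1 ∧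
          (star ψ ⬝ᵥ (ρ *ᵥ ψ)).re ≤ 1 - ε ∧ (Ω * ρ).trace.re = x}
        (1 - spectralGap d Ω ψ * ε) := by
  set lam := secondEigenvalue d Ω ψ with hlam
  have hgap : spectralGap d Ω ψ = 1 - lam := rfl
  have hlam1 : lam ≤ 1 := lambda_le_one Ω ψ hd hψ hΩle
  have hΩvM : star ψ ᵥ* Ω = star ψ := vecMul_herm_eigen hΩherm hΩψ
  obtain ⟨φ, hφu, hφo, hφval⟩ := sup_achieved Ω ψ hd hψ hΩle
  have hex : ∃ ρ : Matrix (Fin d) (Fin d) ℂ, ρ.PosSemidef ∧ ρ.trace = 1 ∧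
      (star ψ ⬝ᵥ (ρ *ᵥ ψ)).re = 1 - ε ∧
      (Ω * ρ).trace.re = 1 - spectralGap d Ω ψ * ε := by
    refine ⟨((1-ε:ℝ):ℂ) • vecMulVec ψ (star ψ) + ((ε:ℝ):ℂ) • vecMulVec φ (star φ),
      ?_, ?_, ?_, ?_⟩
    · exact (psd_smul (outer_posSemidef ψ) (by linarith)).add
        (psd_smul (outer_posSemidef φ) hε0)
    · rw [trace_add, trace_smul, trace_smul, trace_outer, trace_outer, hψ, hφu,
        smul_eq_mul, smul_eq_mul, mul_one, mul_one]
      push_cast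
      ring
    · rw [add_mulVec, smul_mulVec, smul_mulVec, vecMulVec_star_mulVec,
        vecMulVec_star_mulVec, hψ, hφo, one_smul, zero_smul, smul_zero, add_zero,
        dotProduct_smul, hψ, smul_eq_mul, mul_one, Complex.ofReal_re]
    · rw [mul_add, Matrix.mul_smul, Matrix.mul_smul, trace_add, trace_smul, trace_smul,
        trace_mul_outer, trace_mul_outer, hΩψ, hψ, smul_eq_mul, smul_eq_mul, mul_one,
        Complex.add_re, Complex.re_ofReal_mul, Complex.ofReal_re, hφval, hgap]
      ring
  refine ⟨hex, ?_, ?_⟩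
  · obtain ⟨ρ, h1, h2, h3, h4⟩ := hex
    exact ⟨ρ, h1, h2, le_of_eq h3, h4⟩
  · rintro x ⟨ρ, hρpsd, hρtr, hρin, rfl⟩
    set M : Matrix (Fin d) (Fin d) ℂ :=
      ((lam:ℝ):ℂ) • 1 + (((1-lam:ℝ)):ℂ) • vecMulVec ψ (star ψ) with hM
    have hMherm : M.IsHermitian :=
      (herm_real_smul isHermitian_one lam).add (herm_real_smul (outer_posSemidef ψ).1 _)
    have hMΩpsd : (M - Ω).PosSemidef := by
      refine PosSemidef.of_dotProduct_mulVec_nonneg (hMherm.sub hΩherm) ?_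
      intro v
      set c : ℂ := star ψ ⬝ᵥ v with hc
      set w : Fin d → ℂ := v - c • ψ with hw
      have hvw : v = c • ψ + w := by rw [hw]; abel
      have hw1 : star ψ ⬝ᵥ w = 0 := by
        rw [hw, dotProduct_sub, dotProduct_smul, hψ, smul_eq_mul, mul_one, sub_self]
      have hw2 : star w ⬝ᵥ ψ = 0 := by
        rw [star_dotProduct, hw1, star_zero]
      have hvψ : star v ⬝ᵥ ψ = star c := by
        rw [star_dotProduct, hc]
      have hQΩ : star v ⬝ᵥ (Ω *ᵥ v)
          = (star c * c) * (star ψ ⬝ᵥ ψ) + star w ⬝ᵥ (Ω *ᵥ w) := by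
        conv_lhs => rw [hvw]
        exact dot_decomp Ω ψ hΩψ hΩvM c w hw1 hw2
      have hQ1 : star v ⬝ᵥ v = (star c * c) * (star ψ ⬝ᵥ ψ) + star w ⬝ᵥ w := by
        have h := dot_decomp (1 : Matrix (Fin d) (Fin d) ℂ) ψ (one_mulVec ψ)
          (vecMul_one (star ψ)) c w hw1 hw2
        simp only [one_mulVec] at h
        conv_lhs => rw [hvw]
        exact h
      have hQM : star v ⬝ᵥ (M *ᵥ v)
          = ((lam:ℝ):ℂ) * (star v ⬝ᵥ v) + (((1-lam:ℝ)):ℂ) * (star c * c) := by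
        rw [hM, add_mulVec, smul_mulVec, smul_mulVec, one_mulVec,
          vecMulVec_star_mulVec, ← hc, dotProduct_add, dotProduct_smul, dotProduct_smul,
          dotProduct_smul, hvψ, smul_eq_mul, smul_eq_mul, smul_eq_mul]
        ring
      have hz : star v ⬝ᵥ ((M - Ω) *ᵥ v)
          = star v ⬝ᵥ (M *ᵥ v) - star v ⬝ᵥ (Ω *ᵥ v) := by
        rw [sub_mulVec, dotProduct_sub]
      have hcc : star c * c = ((Complex.normSq c : ℝ) : ℂ) := by
        rw [Complex.star_def, mul_comm, Complex.mul_conj]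
      rw [hz, hQM, hQΩ, hQ1, hψ, dot_self_eq_re w, herm_dot_real hΩherm w, hcc]
      have heq : ((lam:ℝ):ℂ) * (((Complex.normSq c : ℝ):ℂ) * 1 + (((star w ⬝ᵥ w).re : ℝ):ℂ))
            + (((1-lam:ℝ)):ℂ) * ((Complex.normSq c : ℝ):ℂ)
            - ((((Complex.normSq c : ℝ)):ℂ) * 1 + (((star w ⬝ᵥ (Ω *ᵥ w)).re : ℝ):ℂ))
          = (((lam * (star w ⬝ᵥ w).re - (star w ⬝ᵥ (Ω *ᵥ w)).re : ℝ)) : ℂ) := by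
        push_cast
        ring
      rw [heq, Complex.zero_le_real]
      have hq := quad_le Ω ψ hΩle w hw2
      linarith
    have h0 : 0 ≤ ((M - Ω) * ρ).trace := trace_mul_psd_nonneg hMΩpsd hρpsd
    rw [Matrix.sub_mul, trace_sub] at h0
    have hre := (Complex.le_def.mp (sub_nonneg.mp h0)).1
    have hMtr : (M * ρ).trace
        = ((lam:ℝ):ℂ) * ρ.trace + (((1-lam:ℝ)):ℂ) * (star ψ ⬝ᵥ (ρ *ᵥ ψ)) := by
      rw [hM, Matrix.add_mul, Matrix.smul_mul, Matrix.smul_mul, Matrix.one_mul,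
        trace_add, trace_smul, trace_smul, smul_eq_mul, smul_eq_mul]
      congr 1
      rw [trace_mul_comm, trace_mul_outer]
    rw [hMtr, hρtr, mul_one] at hre
    simp only [Complex.add_re, Complex.re_ofReal_mul, Complex.ofReal_re] at hre
    rw [hgap]
    nlinarith [hρin, hre]
end
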